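/- arXiv:2007.04036 — 8 statements merged into one kernel-verified Lean document; each statement's English description precedes it below -/
import Mathlib

section
/- With the Paillier setup, for every natural number m and every unit r of ZMod (N²), the ciphertext c = Γ^m · r^N (a unit of ZMod (N²)) decrypts correctly: D(c) = L(c^λ)·μ equals the image of m in ZMod N. -/
/-- The Paillier `L` function: for a unit `w` of `ZMod (N^2)`,
`L(w) = (w.val - 1) / N`, viewed as an element of `ZMod N`. -/
def paillierL (N : ℕ) (w : (ZMod (N ^ 2))ˣ) : ZMod N :=
  ((((w : ZMod (N ^ 2)).val - 1) / N : ℕ) : ZMod N)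

/-- Paillier decryption: `D(c) = L(c^λ) · μ`. -/
def paillierD (N lam : ℕ) (μ : ZMod N) (c : (ZMod (N ^ 2))ˣ) : ZMod N :=
  paillierL N (c ^ lam) * μ

/-- Fermat/Euler: if `φ(n) ∣ k` and `x` is coprime to `n`, then `x^k ≡ 1 [MOD n]`. -/
lemma paillier_aux_pow_modeq_one (x n k : ℕ) (hco : x.Coprime n) (h : n.totient ∣ k) :
    x ^ k ≡ 1 [MOD n] := by
  obtain ⟨t, rfl⟩ := h
  calc x ^ (n.totient * t) = (x ^ n.totient) ^ t := by rw [pow_mul]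
    _ ≡ 1 ^ t [MOD n] := (Nat.ModEq.pow_totient hco).pow t
    _ = 1 := one_pow t

/-- Binomial: `(1 + N*a)^m ≡ 1 + m*(N*a) [MOD N^2]`. -/
lemma paillier_aux_one_add_pow (N a m : ℕ) :
    (1 + N * a) ^ m ≡ 1 + m * (N * a) [MOD N ^ 2] := by
  induction m with
  | zero => simpa using Nat.ModEq.refl 1
  | succ m ih =>
    calc (1 + N * a) ^ (m + 1) = (1 + N * a) ^ m * (1 + N * a) := pow_succ _ _
      _ ≡ (1 + m * (N * a)) * (1 + N * a) [MOD N ^ 2] := ih.mul_right _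
      _ = (1 + (m + 1) * (N * a)) + (m * a * a) * N ^ 2 := by ring
      _ ≡ (1 + (m + 1) * (N * a)) + 0 [MOD N ^ 2] :=
        Nat.ModEq.add_left _ ((Nat.modEq_zero_iff_dvd).mpr ⟨m * a * a, mul_comm _ _⟩)
      _ = 1 + (m + 1) * (N * a) := by ring

theorem paillier_decrypt_correct
    (p q : ℕ) (hp : p.Prime) (hq : q.Prime) (hpq : p ≠ q)
    (N : ℕ) (hN : N = p * q)
    (hco : Nat.Coprime N ((p - 1) * (q - 1)))
    (lam : ℕ) (hlam : lam = Nat.lcm (p - 1) (q - 1))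
    (Γ : (ZMod (N ^ 2))ˣ) (μ : ZMod N)
    (hμ : paillierL N (Γ ^ lam) * μ = 1)
    (m : ℕ) (r : (ZMod (N ^ 2))ˣ) :
    paillierD N lam μ (Γ ^ m * r ^ N) = (m : ZMod N) := by
  have hpq' : Nat.Coprime p q := (Nat.coprime_primes hp hq).mpr hpq
  have hN0 : N ≠ 0 := by
    rw [hN]; exact Nat.mul_ne_zero hp.pos.ne' hq.pos.ne'
  have hN1 : 1 < N := by
    rw [hN]; exact Nat.one_lt_mul_iff.mpr ⟨hp.pos, hq.pos, Or.inl hp.one_lt⟩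
  haveI : NeZero N := ⟨hN0⟩
  haveI : NeZero (N ^ 2) := ⟨pow_ne_zero 2 hN0⟩
  have hpdvd : p ∣ N ^ 2 := hN ▸ (dvd_mul_right p q).trans (dvd_pow_self _ two_ne_zero)
  have hqdvd : q ∣ N ^ 2 := hN ▸ (dvd_mul_left q p).trans (dvd_pow_self _ two_ne_zero)
  have hplam : (p - 1) ∣ lam := hlam ▸ Nat.dvd_lcm_left _ _
  have hqlam : (q - 1) ∣ lam := hlam ▸ Nat.dvd_lcm_right _ _
  -- Fact A : r ^ (N * lam) = 1
  set s : ℕ := ((r : ZMod (N ^ 2))).val with hs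
  have hscop : s.Coprime (N ^ 2) := ZMod.val_coe_unit_coprime r
  have hA : s ^ (N * lam) ≡ 1 [MOD N ^ 2] := by
    have hNsq : N ^ 2 = p ^ 2 * q ^ 2 := by rw [hN, mul_pow]
    have hAp : s ^ (N * lam) ≡ 1 [MOD p ^ 2] := by
      refine paillier_aux_pow_modeq_one _ _ _
        (Nat.Coprime.coprime_dvd_right (pow_dvd_pow_of_dvd (hN ▸ dvd_mul_right p q) 2) hscop) ?_
      rw [Nat.totient_prime_pow hp (by norm_num : 0 < 2), hN]
      have : p ^ (2 - 1) * (p - 1) = p * (p - 1) := by norm_num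
      rw [this, mul_assoc]
      exact mul_dvd_mul_left p (hplam.mul_left q)
    have hAq : s ^ (N * lam) ≡ 1 [MOD q ^ 2] := by
      refine paillier_aux_pow_modeq_one _ _ _
        (Nat.Coprime.coprime_dvd_right (pow_dvd_pow_of_dvd (hN ▸ dvd_mul_left q p) 2) hscop) ?_
      rw [Nat.totient_prime_pow hq (by norm_num : 0 < 2), hN]
      have : q ^ (2 - 1) * (q - 1) = q * (q - 1) := by norm_num
      rw [this]
      calc q * (q - 1) ∣ q * lam := mul_dvd_mul_left q hqlam
        _ ∣ p * q * lam := ⟨p, by ring⟩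
    rw [hNsq]
    exact (Nat.modEq_and_modEq_iff_modEq_mul (Nat.Coprime.pow 2 2 hpq')).mp ⟨hAp, hAq⟩
  have hr1 : r ^ (N * lam) = 1 := by
    have h1 : ((r : ZMod (N ^ 2))) ^ (N * lam) = 1 := by
      have h2 : (((s ^ (N * lam) : ℕ)) : ZMod (N ^ 2)) = ((1 : ℕ) : ZMod (N ^ 2)) :=
        (ZMod.natCast_eq_natCast_iff _ _ _).mpr hA
      have h3 : ((s : ℕ) : ZMod (N ^ 2)) = (r : ZMod (N ^ 2)) := ZMod.natCast_rightInverse _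
      rw [← h3, ← Nat.cast_pow, h2, Nat.cast_one]
    ext
    simpa using h1
  -- c ^ lam = (Γ ^ lam) ^ m
  have hc : (Γ ^ m * r ^ N) ^ lam = (Γ ^ lam) ^ m := by
    rw [mul_pow, ← pow_mul, ← pow_mul, hr1, mul_one, mul_comm m lam, pow_mul]
  -- Fact B : v := val of Γ^lam is ≡ 1 mod N
  set g : ℕ := ((Γ : ZMod (N ^ 2))).val with hg
  have hgcop : g.Coprime (N ^ 2) := ZMod.val_coe_unit_coprime Γ
  have hB : g ^ lam ≡ 1 [MOD N] := by
    have hBp : g ^ lam ≡ 1 [MOD p] :=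
      paillier_aux_pow_modeq_one _ _ _ (Nat.Coprime.coprime_dvd_right hpdvd hgcop)
        (by rw [Nat.totient_prime hp]; exact hplam)
    have hBq : g ^ lam ≡ 1 [MOD q] :=
      paillier_aux_pow_modeq_one _ _ _ (Nat.Coprime.coprime_dvd_right hqdvd hgcop)
        (by rw [Nat.totient_prime hq]; exact hqlam)
    rw [hN]
    exact (Nat.modEq_and_modEq_iff_modEq_mul hpq').mp ⟨hBp, hBq⟩
  set v : ℕ := (((Γ ^ lam : (ZMod (N ^ 2))ˣ) : ZMod (N ^ 2))).val with hv
  have hvg : ((Γ ^ lam : (ZMod (N ^ 2))ˣ) : ZMod (N ^ 2)) = ((g ^ lam : ℕ) : ZMod (N ^ 2)) := by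
    rw [Nat.cast_pow, ZMod.natCast_rightInverse]
    rfl
  have hvval : v = g ^ lam % N ^ 2 := by rw [hv, hvg, ZMod.val_natCast]
  have hvB : v ≡ 1 [MOD N] := by
    have : v ≡ g ^ lam [MOD N ^ 2] := by rw [hvval]; exact Nat.mod_modEq _ _
    exact (this.of_dvd (dvd_pow_self N two_ne_zero)).trans hB
  have hvmod : v % N = 1 := by
    have := hvB
    unfold Nat.ModEq at this
    rwa [Nat.mod_eq_of_lt hN1] at this
  have hv1 : 1 ≤ v := by
    rcases Nat.eq_zero_or_pos v with h | h
    · rw [h] at hvmod; simp at hvmod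
    · exact h
  have hvdvd : N ∣ v - 1 := (Nat.modEq_iff_dvd' hv1).mp hvB.symm
  set a : ℕ := (v - 1) / N with ha
  have hva : v = 1 + N * a := by
    rw [ha, Nat.mul_div_cancel' hvdvd]
    omega
  -- compute the value of (Γ^lam)^m
  set u : ℕ := ((((Γ ^ lam) ^ m : (ZMod (N ^ 2))ˣ) : ZMod (N ^ 2))).val with hu
  have hwv : ((Γ ^ lam : (ZMod (N ^ 2))ˣ) : ZMod (N ^ 2))
      = (((1 + N * a : ℕ)) : ZMod (N ^ 2)) := by
    rw [← hva]
    exact (ZMod.natCast_rightInverse _).symm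
  have hug : (((Γ ^ lam) ^ m : (ZMod (N ^ 2))ˣ) : ZMod (N ^ 2))
      = (((1 + N * a) ^ m : ℕ) : ZMod (N ^ 2)) := by
    rw [Units.val_pow_eq_pow_val, hwv, ← Nat.cast_pow]
  have humod : u ≡ 1 + N * (m * a) [MOD N ^ 2] := by
    have h1 : u = (1 + N * a) ^ m % N ^ 2 := by rw [hu, hug, ZMod.val_natCast]
    have h2 : u ≡ (1 + N * a) ^ m [MOD N ^ 2] := by rw [h1]; exact Nat.mod_modEq _ _
    have h3 := paillier_aux_one_add_pow N a m
    have h4 : 1 + m * (N * a) = 1 + N * (m * a) := by ring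
    rw [h4] at h3
    exact h2.trans h3
  have huB : u ≡ 1 [MOD N] := by
    have h5 : (1 + N * (m * a)) ≡ 1 [MOD N] := by
      have : (N : ℕ) ∣ N * (m * a) := dvd_mul_right _ _
      calc 1 + N * (m * a) ≡ 1 + 0 [MOD N] :=
            Nat.ModEq.add_left _ ((Nat.modEq_zero_iff_dvd).mpr this)
        _ = 1 := by ring
    exact (humod.of_dvd (dvd_pow_self N two_ne_zero)).trans h5
  have humod' : u % N = 1 := by
    have := huB
    unfold Nat.ModEq at this
    rwa [Nat.mod_eq_of_lt hN1] at this
  have hu1 : 1 ≤ u := by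
    rcases Nat.eq_zero_or_pos u with h | h
    · rw [h] at humod'; simp at humod'
    · exact h
  have hudvd : N ∣ u - 1 := (Nat.modEq_iff_dvd' hu1).mp huB.symm
  set b : ℕ := (u - 1) / N with hb
  have hub : u = 1 + N * b := by
    rw [hb, Nat.mul_div_cancel' hudvd]
    omega
  have hbma : b ≡ m * a [MOD N] := by
    have h6 : 1 + N * b ≡ 1 + N * (m * a) [MOD N * N] := by
      rw [← hub]
      have : N ^ 2 = N * N := sq N
      rw [← this]
      exact humod
    exact Nat.ModEq.mul_left_cancel' hN0 (Nat.ModEq.add_left_cancel' 1 h6)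
  -- conclude
  have hLa : paillierL N (Γ ^ lam) = ((a : ℕ) : ZMod N) := rfl
  have hLb : paillierL N ((Γ ^ lam) ^ m) = ((b : ℕ) : ZMod N) := rfl
  calc paillierD N lam μ (Γ ^ m * r ^ N)
      = paillierL N ((Γ ^ m * r ^ N) ^ lam) * μ := rfl
    _ = paillierL N ((Γ ^ lam) ^ m) * μ := by rw [hc]
    _ = ((b : ℕ) : ZMod N) * μ := by rw [hLb]
    _ = ((m * a : ℕ) : ZMod N) * μ := by
        rw [(ZMod.natCast_eq_natCast_iff _ _ _).mpr hbma]
    _ = (m : ZMod N) * (((a : ℕ) : ZMod N) * μ) := by push_cast; ring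
    _ = (m : ZMod N) * (paillierL N (Γ ^ lam) * μ) := by rw [hLa]
    _ = (m : ZMod N) := by rw [hμ, mul_one]
end

section
/- With the Paillier setup, Paillier encryption is additively homomorphic: for natural numbers m₁, m₂ and units r₁, r₂ of ZMod (N²), the ciphertexts c₁ = Γ^{m₁}·r₁^N and c₂ = Γ^{m₂}·r₂^N satisfy D(c₁·c₂) = image of m₁ + m₂ in ZMod N. -/
/-- In `(ZMod M)ˣ` with `M = m*n`, `m, n` coprime, any unit to a power divisible by
both totients is 1. -/
lemma paillier_units_pow_eq_one (m n k M : ℕ) (hM : M = m * n)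
    (h : Nat.Coprime m n) (h1 : Nat.totient m ∣ k) (h2 : Nat.totient n ∣ k)
    (u : (ZMod M)ˣ) : u ^ k = 1 := by
  subst hM
  set E : (ZMod (m*n))ˣ ≃* (ZMod m)ˣ × (ZMod n)ˣ :=
    (Units.mapEquiv (ZMod.chineseRemainder h).toMulEquiv).trans MulEquiv.prodUnits with hE
  have key : E (u ^ k) = 1 := by
    rw [map_pow]
    obtain ⟨t1, ht1⟩ := h1
    obtain ⟨t2, ht2⟩ := h2
    have e1 : (E u).1 ^ k = 1 := by
      rw [ht1, pow_mul, ZMod.pow_totient, one_pow]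
    have e2 : (E u).2 ^ k = 1 := by
      rw [ht2, pow_mul, ZMod.pow_totient, one_pow]
    have : (E u) ^ k = ((E u).1 ^ k, (E u).2 ^ k) := rfl
    rw [this, e1, e2]
    rfl
  exact E.injective (key.trans (map_one E).symm)

/-- The binomial congruence `(1+a*N)^k ≡ 1 + k*(a*N) [MOD N^2]`. -/
lemma paillier_pow_modeq (N a : ℕ) : ∀ k : ℕ, (1 + a*N)^k ≡ 1 + k*(a*N) [MOD N^2] := by
  intro k
  induction k with
  | zero => simp [Nat.ModEq.refl]
  | succ k ih =>
    have step : (1 + a*N)^(k+1) ≡ (1 + k*(a*N)) * (1 + a*N) [MOD N^2] := by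
      rw [pow_succ]
      exact ih.mul_right _
    have expand : (1 + k*(a*N)) * (1 + a*N) = (1 + (k+1)*(a*N)) + k*a*a*N^2 := by ring
    have drop : (1 + (k+1)*(a*N)) + k*a*a*N^2 ≡ (1 + (k+1)*(a*N)) + 0 [MOD N^2] :=
      Nat.ModEq.add_left _ (Nat.modEq_zero_iff_dvd.mpr ⟨k*a*a, by ring⟩)
    calc (1 + a*N)^(k+1) ≡ (1 + k*(a*N)) * (1 + a*N) [MOD N^2] := step
      _ = (1 + (k+1)*(a*N)) + k*a*a*N^2 := expand
      _ ≡ (1 + (k+1)*(a*N)) + 0 [MOD N^2] := drop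
      _ = 1 + (k+1)*(a*N) := by ring

/-- If a unit of `ZMod (N^2)` equals the image of `1 + a*N`, its `L` value is `a`. -/
lemma paillierL_eq (N : ℕ) (hN2 : 2 ≤ N) (w : (ZMod (N^2))ˣ) (a : ℕ)
    (hw : (w : ZMod (N^2)) = ((1 + a*N : ℕ) : ZMod (N^2))) :
    paillierL N w = (a : ZMod N) := by
  haveI : NeZero N := ⟨by omega⟩
  haveI : NeZero (N^2) := ⟨by positivity⟩
  set v : ℕ := (w : ZMod (N^2)).val with hv
  have hvmod : v ≡ 1 + a*N [MOD N^2] := by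
    rw [← ZMod.natCast_eq_natCast_iff]
    rw [hv, ZMod.natCast_val, ZMod.cast_id, hw]
  have hvN : v ≡ 1 + a*N [MOD N] := hvmod.of_dvd (dvd_pow_self N (by norm_num))
  have h1aN : (1 + a*N) % N = 1 % N := by simp [Nat.add_mul_mod_self_right]
  have hv1mod : v ≡ 1 [MOD N] := hvN.trans h1aN
  have hv1 : 1 ≤ v := by
    rcases Nat.eq_zero_or_pos v with h0 | h; swap
    · exact h
    · exfalso
      have h' : (0:ℕ) % N = 1 % N := h0 ▸ hv1mod
      rw [Nat.zero_mod, Nat.mod_eq_of_lt (by omega)] at h'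
      omega
  obtain ⟨b, hb⟩ : N ∣ v - 1 := (Nat.modEq_iff_dvd' hv1).mp hv1mod.symm
  -- v = 1 + N * b
  have hvb : v = 1 + N * b := by rw [← hb]; omega
  -- cancel to get b ≡ a [MOD N]
  have hcan : N * b ≡ N * a [MOD N * N] := by
    have : 1 + N*b ≡ 1 + N*a [MOD N*N] := by
      have := hvmod
      rw [hvb] at this
      rw [mul_comm a N] at this
      rwa [pow_two] at this
    exact Nat.ModEq.add_left_cancel' 1 this
  have hba : b ≡ a [MOD N] := Nat.ModEq.mul_left_cancel' (by omega) hcan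
  have hdiv : (v - 1) / N = b := by
    rw [hb, Nat.mul_div_cancel_left _ (by omega : 0 < N)]
  unfold paillierL
  rw [← hv, hdiv]
  exact (ZMod.natCast_eq_natCast_iff _ _ _).mpr hba

theorem paillier_add_homomorphic
    (p q : ℕ) (hp : p.Prime) (hq : q.Prime) (hpq : p ≠ q)
    (N : ℕ) (hN : N = p * q)
    (hco : Nat.Coprime N ((p - 1) * (q - 1)))
    (lam : ℕ) (hlam : lam = Nat.lcm (p - 1) (q - 1))
    (Γ : (ZMod (N ^ 2))ˣ) (μ : ZMod N)
    (hμ : paillierL N (Γ ^ lam) * μ = 1)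
    (m₁ m₂ : ℕ) (r₁ r₂ : (ZMod (N ^ 2))ˣ) :
    paillierD N lam μ ((Γ ^ m₁ * r₁ ^ N) * (Γ ^ m₂ * r₂ ^ N)) = ((m₁ + m₂ : ℕ) : ZMod N) := by
  have hp2 := hp.two_le
  have hq2 := hq.two_le
  have hN2 : 2 ≤ N := by
    have : 4 ≤ p * q := Nat.mul_le_mul hp2 hq2
    omega
  haveI : NeZero N := ⟨by omega⟩
  haveI : NeZero (N^2) := ⟨by positivity⟩
  -- totient values
  have htp : Nat.totient p = p - 1 := Nat.totient_prime hp
  have htq : Nat.totient q = q - 1 := Nat.totient_prime hq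
  have htp2 : Nat.totient (p^2) = p * (p - 1) := by
    rw [Nat.totient_prime_pow hp (by norm_num)]
    ring_nf
  have htq2 : Nat.totient (q^2) = q * (q - 1) := by
    rw [Nat.totient_prime_pow hq (by norm_num)]
    ring_nf
  have hcopq : Nat.Coprime p q := (Nat.coprime_primes hp hq).mpr hpq
  -- (G1) every unit to the (N*lam) is 1
  have G1 : ∀ r : (ZMod (N^2))ˣ, r ^ (N * lam) = 1 := by
    intro r
    apply paillier_units_pow_eq_one (p^2) (q^2) (N*lam) (N^2)
      (by rw [hN, mul_pow]) (hcopq.pow 2 2)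
    · rw [htp2, hN]
      have h1 : p - 1 ∣ lam := hlam ▸ Nat.dvd_lcm_left _ _
      have : p * (p-1) ∣ p * (q * lam) := mul_dvd_mul_left p (h1.mul_left q)
      calc p * (p-1) ∣ p * (q * lam) := this
        _ = p * q * lam := by ring
    · rw [htq2, hN]
      have h1 : q - 1 ∣ lam := hlam ▸ Nat.dvd_lcm_right _ _
      have : q * (q-1) ∣ q * (p * lam) := mul_dvd_mul_left q (h1.mul_left p)
      calc q * (q-1) ∣ q * (p * lam) := this
        _ = p * q * lam := by ring
  -- (G2) the image of any unit to the lam in ZMod N is 1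
  have G2 : ∀ u : (ZMod N)ˣ, u ^ lam = 1 := by
    intro u
    apply paillier_units_pow_eq_one p q lam N hN hcopq
    · rw [htp]; exact hlam ▸ Nat.dvd_lcm_left _ _
    · rw [htq]; exact hlam ▸ Nat.dvd_lcm_right _ _
  -- Γ^lam ≡ 1 mod N, so it equals a cast of 1 + a*N
  have hdvd : N ∣ N^2 := dvd_pow_self N (by norm_num)
  set π : ZMod (N^2) →+* ZMod N := ZMod.castHom hdvd (ZMod N) with hπ
  have hπΓ : π ((Γ^lam : (ZMod (N^2))ˣ) : ZMod (N^2)) = 1 := by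
    have : (Units.map π.toMonoidHom Γ) ^ lam = 1 := G2 _
    have h2 : ((Units.map π.toMonoidHom Γ) ^ lam : (ZMod N)ˣ) = (1 : (ZMod N)ˣ) := this
    have h3 := congrArg (Units.val) h2
    simpa [Units.val_pow_eq_pow_val, ← map_pow] using h3
  -- extract a
  set x : ZMod (N^2) := ((Γ^lam : (ZMod (N^2))ˣ) : ZMod (N^2)) with hx
  have hxval : ((x.val : ℕ) : ZMod N) = 1 := by
    rw [ZMod.natCast_val]
    rw [← ZMod.castHom_apply (h := hdvd)]
    exact hπΓ
  have hxmod : x.val ≡ 1 [MOD N] := by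
    have := (ZMod.natCast_eq_natCast_iff x.val 1 N).mp (by simpa using hxval)
    exact this
  have hx1 : 1 ≤ x.val := by
    by_contra h
    have h0 : x.val = 0 := by omega
    rw [h0] at hxmod
    have h' : (0:ℕ) % N = 1 % N := hxmod
    rw [Nat.zero_mod, Nat.mod_eq_of_lt (by omega)] at h'
    omega
  obtain ⟨a, ha⟩ : N ∣ x.val - 1 := (Nat.modEq_iff_dvd' hx1).mp hxmod.symm
  have hxa : x = ((1 + a*N : ℕ) : ZMod (N^2)) := by
    have h1 : x.val = 1 + a*N := by rw [mul_comm a N, ← ha]; omega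
    rw [← h1]
    rw [ZMod.natCast_val, ZMod.cast_id]
  -- L(Γ^lam) = a
  have hLa : paillierL N (Γ^lam) = (a : ZMod N) := paillierL_eq N hN2 _ a (hx ▸ hxa)
  -- ciphertext power simplification
  set c : (ZMod (N^2))ˣ := (Γ ^ m₁ * r₁ ^ N) * (Γ ^ m₂ * r₂ ^ N) with hc
  have hclam : c ^ lam = (Γ^lam)^(m₁+m₂) := by
    have step1 : c = Γ^(m₁+m₂) * (r₁^N * r₂^N) := by
      rw [hc, pow_add]
      exact mul_mul_mul_comm _ _ _ _
    rw [step1, mul_pow, mul_pow, ← pow_mul, ← pow_mul, ← pow_mul,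
      mul_comm N lam, pow_mul r₁ lam N, pow_mul r₂ lam N]
    rw [mul_comm (m₁+m₂) lam, pow_mul]
    rw [← pow_mul r₁ lam N, ← pow_mul r₂ lam N, mul_comm lam N, G1 r₁, G1 r₂, mul_one, mul_one]
  -- value of c^lam
  have hcval : ((c ^ lam : (ZMod (N^2))ˣ) : ZMod (N^2)) = ((1 + ((m₁+m₂)*a)*N : ℕ) : ZMod (N^2)) := by
    rw [hclam, Units.val_pow_eq_pow_val, ← hx, hxa, ← Nat.cast_pow]
    rw [ZMod.natCast_eq_natCast_iff]
    have := paillier_pow_modeq N a (m₁+m₂)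
    calc (1 + a*N)^(m₁+m₂) ≡ 1 + (m₁+m₂)*(a*N) [MOD N^2] := this
      _ = 1 + ((m₁+m₂)*a)*N := by ring
  have hL2 : paillierL N (c ^ lam) = (((m₁+m₂)*a : ℕ) : ZMod N) :=
    paillierL_eq N hN2 _ _ hcval
  -- finish
  rw [show paillierD N lam μ c = paillierL N (c ^ lam) * μ from rfl, hL2]
  push_cast
  rw [mul_assoc]
  rw [show ((a : ZMod N) * μ) = 1 from by rw [← hLa]; exact hμ]
  simp
end

section
/- With the Paillier setup, Paillier encryption is homomorphic under scalar multiplication: for natural numbers m and a and a unit r of ZMod (N²), the ciphertext c = Γ^m·r^N satisfies D(c^a) = image of a·m in ZMod N. -/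
section Aux

variable {N : ℕ}

private lemma one_le_of_modEq (hN : 1 < N) {v : ℕ} (hv : v ≡ 1 [MOD N]) : 1 ≤ v := by
  rcases Nat.eq_zero_or_pos v with h | h
  · exfalso
    have h0 : 0 % N = 1 % N := by rw [← h]; exact hv
    rw [Nat.zero_mod, Nat.mod_eq_of_lt hN] at h0
    omega
  · exact h

private lemma val_mul_modEq_one (w w' : (ZMod (N ^ 2))ˣ)
    (hw : (w : ZMod (N ^ 2)).val ≡ 1 [MOD N])
    (hw' : (w' : ZMod (N ^ 2)).val ≡ 1 [MOD N]) :
    ((w * w' : (ZMod (N ^ 2))ˣ) : ZMod (N ^ 2)).val ≡ 1 [MOD N] := by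
  have h1 : ((w * w' : (ZMod (N ^ 2))ˣ) : ZMod (N ^ 2)).val
      ≡ (w : ZMod (N ^ 2)).val * (w' : ZMod (N ^ 2)).val [MOD N ^ 2] := by
    rw [Units.val_mul, ZMod.val_mul]
    exact Nat.mod_modEq _ _
  have h2 := Nat.ModEq.of_dvd (dvd_pow_self N two_ne_zero) h1
  have h3 : (w : ZMod (N ^ 2)).val * (w' : ZMod (N ^ 2)).val ≡ 1 * 1 [MOD N] :=
    hw.mul hw'
  simpa using h2.trans h3

private lemma cancel_N {c d : ℕ} (hN : 1 < N) (h : N * c ≡ N * d [MOD N ^ 2]) :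
    c ≡ d [MOD N] := by
  have h' : N * c ≡ N * d [MOD N * N] := by rwa [← sq]
  exact Nat.ModEq.mul_left_cancel' (by omega) h'

private lemma paillierL_mul (hN : 1 < N) (w w' : (ZMod (N ^ 2))ˣ)
    (hw : (w : ZMod (N ^ 2)).val ≡ 1 [MOD N])
    (hw' : (w' : ZMod (N ^ 2)).val ≡ 1 [MOD N]) :
    paillierL N (w * w') = paillierL N w + paillierL N w' := by
  set v := (w : ZMod (N ^ 2)).val with hv
  set v' := (w' : ZMod (N ^ 2)).val with hv'
  set u := ((w * w' : (ZMod (N ^ 2))ˣ) : ZMod (N ^ 2)).val with hu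
  have hv1 : 1 ≤ v := one_le_of_modEq hN hw
  have hv'1 : 1 ≤ v' := one_le_of_modEq hN hw'
  have hu1mod : u ≡ 1 [MOD N] := val_mul_modEq_one w w' hw hw'
  have hu1 : 1 ≤ u := one_le_of_modEq hN hu1mod
  have hdv : N ∣ v - 1 := (Nat.modEq_iff_dvd' hv1).mp hw.symm
  have hdv' : N ∣ v' - 1 := (Nat.modEq_iff_dvd' hv'1).mp hw'.symm
  have hdu : N ∣ u - 1 := (Nat.modEq_iff_dvd' hu1).mp hu1mod.symm
  obtain ⟨a, ha⟩ := hdv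
  obtain ⟨b, hb⟩ := hdv'
  obtain ⟨c, hc⟩ := hdu
  have h1 : u ≡ v * v' [MOD N ^ 2] := by
    rw [hu, Units.val_mul, ZMod.val_mul]
    exact Nat.mod_modEq _ _
  have hveq : v = 1 + N * a := by omega
  have hv'eq : v' = 1 + N * b := by omega
  have hueq : u = 1 + N * c := by omega
  have h2 : v * v' = 1 + N * (a + b) + N ^ 2 * (a * b) := by
    rw [hveq, hv'eq]; ring
  have h3 : v * v' ≡ 1 + N * (a + b) [MOD N ^ 2] := by
    rw [h2]
    have h4 : (1 + N * (a + b)) + N ^ 2 * (a * b) ≡ (1 + N * (a + b)) + 0 [MOD N ^ 2] :=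
      Nat.ModEq.add_left _ (Nat.modEq_zero_iff_dvd.mpr ⟨a * b, rfl⟩)
    simpa using h4
  have h5 : N * c ≡ N * (a + b) [MOD N ^ 2] := by
    have h4 : 1 + N * c ≡ 1 + N * (a + b) [MOD N ^ 2] := by
      rw [← hueq]; exact h1.trans h3
    have h4' : N * c + 1 ≡ N * (a + b) + 1 [MOD N ^ 2] := by
      simpa [Nat.add_comm] using h4
    exact Nat.ModEq.add_right_cancel' 1 h4'
  have h6 : c ≡ a + b [MOD N] := cancel_N hN h5
  have hNpos : 0 < N := by omega
  have hua : (u - 1) / N = c := by rw [hc]; exact Nat.mul_div_cancel_left c hNpos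
  have hva : (v - 1) / N = a := by rw [ha]; exact Nat.mul_div_cancel_left a hNpos
  have hv'a : (v' - 1) / N = b := by rw [hb]; exact Nat.mul_div_cancel_left b hNpos
  unfold paillierL
  rw [← hv, ← hv', ← hu, hua, hva, hv'a,
    (ZMod.natCast_eq_natCast_iff _ _ _).mpr h6]
  push_cast
  ring

private lemma val_pow_modEq_one (hN : 1 < N) (w : (ZMod (N ^ 2))ˣ)
    (hw : (w : ZMod (N ^ 2)).val ≡ 1 [MOD N]) (k : ℕ) :
    ((w ^ k : (ZMod (N ^ 2))ˣ) : ZMod (N ^ 2)).val ≡ 1 [MOD N] := by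
  induction k with
  | zero =>
    haveI : Fact (1 < N ^ 2) := ⟨by nlinarith⟩
    simp only [pow_zero, Units.val_one, ZMod.val_one]
    rfl
  | succ k ih =>
    simpa [pow_succ] using val_mul_modEq_one (w ^ k) w ih hw

private lemma paillierL_pow (hN : 1 < N) (w : (ZMod (N ^ 2))ˣ)
    (hw : (w : ZMod (N ^ 2)).val ≡ 1 [MOD N]) (k : ℕ) :
    paillierL N (w ^ k) = (k : ZMod N) * paillierL N w := by
  induction k with
  | zero =>
    haveI : Fact (1 < N ^ 2) := ⟨by nlinarith⟩
    simp [pow_zero, paillierL, ZMod.val_one]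
  | succ k ih =>
    rw [pow_succ, paillierL_mul hN _ _ (val_pow_modEq_one hN w hw k) hw, ih]
    push_cast
    ring

end Aux

theorem paillier_scalar_homomorphic
    (p q : ℕ) (hp : p.Prime) (hq : q.Prime) (hpq : p ≠ q)
    (N : ℕ) (hN : N = p * q)
    (hco : Nat.Coprime N ((p - 1) * (q - 1)))
    (lam : ℕ) (hlam : lam = Nat.lcm (p - 1) (q - 1))
    (Γ : (ZMod (N ^ 2))ˣ) (μ : ZMod N)
    (hμ : paillierL N (Γ ^ lam) * μ = 1)
    (m a : ℕ) (r : (ZMod (N ^ 2))ˣ) :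
    paillierD N lam μ ((Γ ^ m * r ^ N) ^ a) = ((a * m : ℕ) : ZMod N) := by
  have hp2 := hp.two_le
  have hq2 := hq.two_le
  have hN1 : 1 < N := by rw [hN]; nlinarith
  haveI : NeZero N := ⟨by omega⟩
  haveI : NeZero (N ^ 2) := ⟨by positivity⟩
  haveI : Fact p.Prime := ⟨hp⟩
  haveI : Fact q.Prime := ⟨hq⟩
  have hcopq : Nat.Coprime p q := (Nat.coprime_primes hp hq).mpr hpq
  -- Step 1: any unit of ZMod N raised to lam is 1.
  have key : ∀ x : ZMod N, IsUnit x → x ^ lam = 1 := by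
    intro x hx
    have hdp : p ∣ N := ⟨q, hN⟩
    have hdq : q ∣ N := ⟨p, by rw [hN, mul_comm]⟩
    have hy : ∀ (t : ℕ), t.Prime → (hdt : t ∣ N) → (t - 1) ∣ lam →
        t ∣ (x ^ lam - 1).val := by
      intro t ht hdt hlamdvd
      haveI : Fact t.Prime := ⟨ht⟩
      have hux : IsUnit ((ZMod.castHom hdt (ZMod t)) x) := hx.map _
      have hne : (ZMod.castHom hdt (ZMod t)) x ≠ 0 := hux.ne_zero
      obtain ⟨s, hs⟩ := hlamdvd
      have h0 : (ZMod.castHom hdt (ZMod t)) (x ^ lam - 1) = 0 := by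
        rw [map_sub, map_pow, map_one, hs, pow_mul,
          ZMod.pow_card_sub_one_eq_one hne, one_pow, sub_self]
      rw [ZMod.castHom_apply, ← ZMod.natCast_val,
        ZMod.natCast_eq_zero_iff] at h0
      exact h0
    have hpd := hy p hp hdp (hlam ▸ Nat.dvd_lcm_left _ _)
    have hqd := hy q hq hdq (hlam ▸ Nat.dvd_lcm_right _ _)
    have hNd : N ∣ (x ^ lam - 1).val := by
      have := Nat.Coprime.mul_dvd_of_dvd_of_dvd hcopq hpd hqd
      rwa [← hN] at this
    have hval : (x ^ lam - 1).val < N := ZMod.val_lt _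
    have h0 : (x ^ lam - 1).val = 0 := Nat.eq_zero_of_dvd_of_lt hNd hval
    exact sub_eq_zero.mp ((ZMod.val_eq_zero _).mp h0)
  -- Step 2: for every unit w of ZMod (N^2), (w^lam).val ≡ 1 [MOD N].
  have step2 : ∀ w : (ZMod (N ^ 2))ˣ,
      ((w ^ lam : (ZMod (N ^ 2))ˣ) : ZMod (N ^ 2)).val ≡ 1 [MOD N] := by
    intro w
    have hdvd : N ∣ N ^ 2 := dvd_pow_self N two_ne_zero
    let f : ZMod (N ^ 2) →+* ZMod N := ZMod.castHom hdvd (ZMod N)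
    have hfu : IsUnit (f (w : ZMod (N ^ 2))) := (Units.isUnit w).map _
    have hkey : f ((w ^ lam : (ZMod (N ^ 2))ˣ) : ZMod (N ^ 2)) = 1 := by
      rw [Units.val_pow_eq_pow_val, map_pow]
      exact key _ hfu
    have hv : (((w ^ lam : (ZMod (N ^ 2))ˣ) : ZMod (N ^ 2)).val : ZMod N) = 1 := by
      rw [ZMod.natCast_val, ← ZMod.castHom_apply (h := hdvd)]
      exact hkey
    exact (ZMod.natCast_eq_natCast_iff _ 1 _).mp (by exact_mod_cast hv)
  -- Step 3: compute.
  have hΓ := step2 Γ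
  have hr := step2 r
  -- ((Γ^m * r^N)^a)^lam = (Γ^lam)^(a*m) * (r^lam)^(a*N)
  have hexp : ((Γ ^ m * r ^ N) ^ a) ^ lam
      = (Γ ^ lam) ^ (a * m) * (r ^ lam) ^ (a * N) := by
    rw [← pow_mul, mul_pow, ← pow_mul, ← pow_mul, ← pow_mul, ← pow_mul]
    congr 1 <;> [skip; skip] <;> ring_nf
  rw [paillierD, hexp]
  rw [paillierL_mul hN1 _ _ (val_pow_modEq_one hN1 _ hΓ _) (val_pow_modEq_one hN1 _ hr _),
    paillierL_pow hN1 _ hΓ, paillierL_pow hN1 _ hr]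
  have hNz : ((a * N : ℕ) : ZMod N) = 0 := by
    push_cast
    simp [ZMod.natCast_self]
  push_cast
  push_cast at hNz
  rw [add_mul]
  calc (a : ZMod N) * m * paillierL N (Γ ^ lam) * μ
        + (a : ZMod N) * N * paillierL N (r ^ lam) * μ
      = (a * m : ZMod N) * (paillierL N (Γ ^ lam) * μ)
        + ((a : ZMod N) * N) * (paillierL N (r ^ lam) * μ) := by ring
    _ = (a : ZMod N) * m := by rw [hμ, hNz]; ring
end

section
/- With the Paillier setup, the share-conversion (MtA) ciphertext is a correct encryption of a·b + β′: for natural numbers a, b, β′ and units r, r′ of ZMod (N²), setting c_A = Γ^a·r^N (Alice's ciphertext) and c_B = c_A^b · (Γ^{β′}·r′^N) (Bob's response), one has D(c_B) = image of a·b + β′ in ZMod N. -/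
/-- Units of `ZMod M`, `M = m*n` with `m, n` coprime, are killed by any
common multiple of the totients. -/
lemma units_pow_eq_one_of_coprime {M m n : ℕ} [NeZero m] [NeZero n]
    (hM : M = m * n) (hco : Nat.Coprime m n) (k : ℕ) (hmk : Nat.totient m ∣ k)
    (hnk : Nat.totient n ∣ k) (u : (ZMod M)ˣ) : u ^ k = 1 := by
  subst hM
  haveI : NeZero (m * n) := ⟨mul_ne_zero (NeZero.ne m) (NeZero.ne n)⟩
  have e := Units.mapEquiv (ZMod.chineseRemainder hco).toMulEquiv
  apply e.injective
  rw [map_pow, map_one]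
  set g := e u
  have h1 : (Units.map (RingHom.fst (ZMod m) (ZMod n)).toMonoidHom (g ^ k)) = 1 := by
    obtain ⟨c, rfl⟩ := hmk
    rw [map_pow, pow_mul, ZMod.pow_totient, one_pow]
  have h2 : (Units.map (RingHom.snd (ZMod m) (ZMod n)).toMonoidHom (g ^ k)) = 1 := by
    obtain ⟨c, rfl⟩ := hnk
    rw [map_pow, pow_mul, ZMod.pow_totient, one_pow]
  have h1' := congrArg Units.val h1
  have h2' := congrArg Units.val h2
  simp only [Units.coe_map, RingHom.toMonoidHom_eq_coe, MonoidHom.coe_coe,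
    RingHom.coe_fst, RingHom.coe_snd, Units.val_one] at h1' h2'
  ext
  exacts [h1', h2']

lemma val_mul_aux {N : ℕ} (hN : 1 < N) (w u : ZMod (N ^ 2))
    (hw : w.val % N = 1) (hu : u.val % N = 1) :
    (w * u).val % N = 1 ∧
      ((w * u).val - 1) / N % N = ((w.val - 1) / N + (u.val - 1) / N) % N := by
  haveI : NeZero (N ^ 2) := ⟨by positivity⟩
  have hN0 : 0 < N := by omega
  set A := (w.val - 1) / N with hA
  set B := (u.val - 1) / N with hB
  have hdw := Nat.div_add_mod w.val N
  have hdu := Nat.div_add_mod u.val N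
  have hw2 : w.val - 1 = N * (w.val / N) := by omega
  have hu2 : u.val - 1 = N * (u.val / N) := by omega
  have hA' : A = w.val / N := by rw [hA, hw2, Nat.mul_div_cancel_left _ hN0]
  have hB' : B = u.val / N := by rw [hB, hu2, Nat.mul_div_cancel_left _ hN0]
  have hw1 : w.val = N * A + 1 := by rw [hA']; omega
  have hu1 : u.val = N * B + 1 := by rw [hB']; omega
  have hval : (w * u).val = (w.val * u.val) % N ^ 2 := ZMod.val_mul w u
  set s := (A + B) % N with hs
  set t := (A + B) / N with ht
  have hst : A + B = N * t + s := by rw [ht, hs]; exact (Nat.div_add_mod (A + B) N).symm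
  have hsN : s < N := Nat.mod_lt _ hN0
  have key : (w.val * u.val) % N ^ 2 = N * s + 1 := by
    have expand : w.val * u.val = (N * s + 1) + N ^ 2 * (A * B + t) := by
      rw [hw1, hu1]
      nlinarith [hst]
    rw [expand, Nat.add_mul_mod_self_left]
    apply Nat.mod_eq_of_lt
    nlinarith
  refine ⟨?_, ?_⟩
  · rw [hval, key, add_comm, Nat.add_mul_mod_self_left, Nat.mod_eq_of_lt hN]
  · rw [hval, key, Nat.add_sub_cancel, Nat.mul_div_cancel_left _ hN0]
    rw [hs, Nat.mod_mod_of_dvd _ dvd_rfl]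

lemma val_pow_aux {N : ℕ} (hN : 1 < N) (w : ZMod (N ^ 2))
    (hw : w.val % N = 1) (k : ℕ) :
    (w ^ k).val % N = 1 ∧
      ((((w ^ k).val - 1) / N : ℕ) : ZMod N)
        = (k : ZMod N) * (((w.val - 1) / N : ℕ) : ZMod N) := by
  haveI : NeZero (N ^ 2) := ⟨by positivity⟩
  have hone : (1 : ZMod (N ^ 2)).val = 1 := by
    rw [ZMod.val_one_eq_one_mod]
    exact Nat.mod_eq_of_lt (by nlinarith)
  induction k with
  | zero =>
    rw [pow_zero, hone]
    exact ⟨Nat.mod_eq_of_lt hN, by simp⟩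
  | succ k ih =>
    obtain ⟨ih1, ih2⟩ := ih
    have h := val_mul_aux hN (w ^ k) w ih1 hw
    rw [← pow_succ] at h
    obtain ⟨h1, h2⟩ := h
    refine ⟨h1, ?_⟩
    have hc := congrArg (fun x : ℕ => (x : ZMod N)) h2
    simp only [ZMod.natCast_mod] at hc
    rw [hc]
    push_cast
    rw [ih2]
    ring

theorem mta_ciphertext_correct
    (p q : ℕ) (hp : p.Prime) (hq : q.Prime) (hpq : p ≠ q)
    (N : ℕ) (hN : N = p * q)
    (hco : Nat.Coprime N ((p - 1) * (q - 1)))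
    (lam : ℕ) (hlam : lam = Nat.lcm (p - 1) (q - 1))
    (Γ : (ZMod (N ^ 2))ˣ) (μ : ZMod N)
    (hμ : paillierL N (Γ ^ lam) * μ = 1)
    (a b β' : ℕ) (r r' : (ZMod (N ^ 2))ˣ)
    (cA : (ZMod (N ^ 2))ˣ) (hcA : cA = Γ ^ a * r ^ N)
    (cB : (ZMod (N ^ 2))ˣ) (hcB : cB = cA ^ b * (Γ ^ β' * r' ^ N)) :
    paillierD N lam μ cB = ((a * b + β' : ℕ) : ZMod N) := by
  have hp1 : 1 < p := hp.one_lt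
  have hq1 : 1 < q := hq.one_lt
  have hN1 : 1 < N := by rw [hN]; nlinarith
  haveI : NeZero N := ⟨by omega⟩
  haveI : Fact (1 < N) := ⟨hN1⟩
  haveI : NeZero (N ^ 2) := ⟨by positivity⟩
  haveI : NeZero p := ⟨by omega⟩
  haveI : NeZero q := ⟨by omega⟩
  haveI : NeZero (p ^ 2) := ⟨by positivity⟩
  haveI : NeZero (q ^ 2) := ⟨by positivity⟩
  have hpqco : Nat.Coprime p q := (Nat.coprime_primes hp hq).mpr hpq
  have hplam : (p - 1) ∣ lam := hlam ▸ Nat.dvd_lcm_left _ _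
  have hqlam : (q - 1) ∣ lam := hlam ▸ Nat.dvd_lcm_right _ _
  -- every unit of ZMod (N^2) is killed by N * lam
  have hkill : ∀ u : (ZMod (N ^ 2))ˣ, u ^ (N * lam) = 1 := by
    intro u
    refine units_pow_eq_one_of_coprime (m := p ^ 2) (n := q ^ 2)
      (by rw [hN]; ring) (Nat.Coprime.pow 2 2 hpqco) (N * lam) ?_ ?_ u
    · rw [Nat.totient_prime_pow hp (by norm_num), hN]
      obtain ⟨c, hc⟩ := hplam
      exact ⟨q * c, by rw [hc]; ring⟩
    · rw [Nat.totient_prime_pow hq (by norm_num), hN]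
      obtain ⟨c, hc⟩ := hqlam
      exact ⟨p * c, by rw [hc]; ring⟩
  -- (Γ^lam).val ≡ 1 mod N
  have hΓ : ((Γ : ZMod (N ^ 2)) ^ lam).val % N = 1 := by
    have hdvd : N ∣ N ^ 2 := dvd_pow_self N two_ne_zero
    set f := ZMod.castHom hdvd (ZMod N) with hf
    have hv : (Units.map f.toMonoidHom Γ) ^ lam = 1 := by
      refine units_pow_eq_one_of_coprime (m := p) (n := q) hN hpqco lam ?_ ?_ _
      · rwa [Nat.totient_prime hp]
      · rwa [Nat.totient_prime hq]
    have hv' := congrArg Units.val hv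
    rw [← map_pow] at hv'
    simp only [Units.coe_map, RingHom.toMonoidHom_eq_coe, MonoidHom.coe_coe,
      Units.val_one, Units.val_pow_eq_pow_val] at hv'
    have hcast : f ((Γ : ZMod (N ^ 2)) ^ lam)
        = ((((Γ : ZMod (N ^ 2)) ^ lam).val : ℕ) : ZMod N) := by
      rw [ZMod.castHom_apply, ZMod.natCast_val]
    rw [hcast] at hv'
    have := congrArg ZMod.val hv'
    rwa [ZMod.val_natCast, ZMod.val_one] at this
  -- rewrite cB
  have hcB' : cB = Γ ^ (a * b + β') * (r ^ b * r') ^ N := by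
    rw [hcB, hcA]
    ext
    push_cast [Units.val_mul, Units.val_pow_eq_pow_val, ← pow_mul, ← pow_add, mul_pow]
    ring
  have hcBlam : cB ^ lam = (Γ ^ lam) ^ (a * b + β') := by
    rw [hcB', mul_pow, ← pow_mul, ← pow_mul, hkill, mul_one,
      Nat.mul_comm (a * b + β') lam, pow_mul]
  have hpow := val_pow_aux hN1 ((Γ : ZMod (N ^ 2)) ^ lam) hΓ (a * b + β')
  have hL : paillierL N (cB ^ lam)
      = ((a * b + β' : ℕ) : ZMod N) * paillierL N (Γ ^ lam) := by
    rw [hcBlam]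
    unfold paillierL
    rw [Units.val_pow_eq_pow_val, Units.val_pow_eq_pow_val]
    rw [(val_pow_aux hN1 ((Γ : ZMod (N ^ 2)) ^ lam) hΓ (a * b + β')).2]
  unfold paillierD
  rw [hL, mul_assoc, hμ, mul_one]
end

section
/- Recovery-signature consistency for players P₁ and P₃: let q be a prime with q > 3 and work in ZMod q. Given u₁, u₂, m₁, m₂, σ₃₁, σ₃₂ ∈ ZMod q, set σ_{i,1} = u_i + 2·m_i and σ_{i,3} = u_i + m_i for i = 1,2, x₁ = σ_{1,1} + σ_{2,1} + σ₃₁, x₃ = σ_{1,3} + 2·σ₃₁ − σ₃₂ + σ_{2,3}, u = u₁ + u₂ + 3·σ₃₁ − 2·σ₃₂, ω₁ = 3·x₁, ω̃₁ = −3⁻¹·ω₁ and ω₃ = 2·x₃. Then ω̃₁ + ω₃ = u. -/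
theorem recovery_signature_consistency_P1_P3
    (q : ℕ) [Fact q.Prime] (hq3 : 3 < q)
    (u₁ u₂ m₁ m₂ σ₃₁ σ₃₂ : ZMod q)
    (σ₁₁ σ₂₁ σ₁₃ σ₂₃ : ZMod q)
    (hσ₁₁ : σ₁₁ = u₁ + 2 * m₁) (hσ₂₁ : σ₂₁ = u₂ + 2 * m₂)
    (hσ₁₃ : σ₁₃ = u₁ + m₁) (hσ₂₃ : σ₂₃ = u₂ + m₂)
    (x₁ x₃ : ZMod q)
    (hx₁ : x₁ = σ₁₁ + σ₂₁ + σ₃₁)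
    (hx₃ : x₃ = σ₁₃ + 2 * σ₃₁ - σ₃₂ + σ₂₃)
    (u : ZMod q) (hu : u = u₁ + u₂ + 3 * σ₃₁ - 2 * σ₃₂)
    (ω₁ : ZMod q) (hω₁ : ω₁ = 3 * x₁)
    (ωtilde₁ : ZMod q) (hωtilde₁ : ωtilde₁ = -(3 : ZMod q)⁻¹ * ω₁)
    (ω₃ : ZMod q) (hω₃ : ω₃ = 2 * x₃) :
    ωtilde₁ + ω₃ = u := by
  have h3 : (3 : ZMod q) ≠ 0 := by
    have : ((3 : ℕ) : ZMod q) ≠ 0 := by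
      rw [Ne, ZMod.natCast_eq_zero_iff]
      exact Nat.not_dvd_of_pos_of_lt (by norm_num) hq3
    simpa using this
  have hinv : (3 : ZMod q)⁻¹ * 3 = 1 := ZMod.inv_mul_of_unit 3 (by
    simpa using (isUnit_iff_ne_zero.mpr h3))
  subst hσ₁₁ hσ₂₁ hσ₁₃ hσ₂₃ hx₁ hx₃ hu hω₁ hωtilde₁ hω₃
  have : -(3 : ZMod q)⁻¹ * (3 * ((u₁ + 2 * m₁) + (u₂ + 2 * m₂) + σ₃₁))
      = -((u₁ + 2 * m₁) + (u₂ + 2 * m₂) + σ₃₁) := by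
    rw [← mul_assoc, neg_mul, hinv]; ring
  rw [this]; ring
end

section
/- Recovery-signature consistency for players P₂ and P₃: let q be a prime with q > 3 and work in ZMod q. Given u₁, u₂, m₁, m₂, σ₃₁, σ₃₂ ∈ ZMod q, set σ_{i,2} = u_i + 3·m_i and σ_{i,3} = u_i + m_i for i = 1,2, x₂ = σ_{1,2} + σ_{2,2} + σ₃₂, x₃ = σ_{1,3} + 2·σ₃₁ − σ₃₂ + σ_{2,3}, u = u₁ + u₂ + 3·σ₃₁ − 2·σ₃₂, ω₂ = −2·x₂, ω̃₂ = 4⁻¹·ω₂ and ω₃ = 3·2⁻¹·x₃. Then ω̃₂ + ω₃ = u. -/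
theorem recovery_signature_consistency_P2_P3
    (q : ℕ) [Fact q.Prime] (hq3 : 3 < q)
    (u₁ u₂ m₁ m₂ σ₃₁ σ₃₂ : ZMod q)
    (σ₁₂ σ₂₂ σ₁₃ σ₂₃ : ZMod q)
    (hσ₁₂ : σ₁₂ = u₁ + 3 * m₁) (hσ₂₂ : σ₂₂ = u₂ + 3 * m₂)
    (hσ₁₃ : σ₁₃ = u₁ + m₁) (hσ₂₃ : σ₂₃ = u₂ + m₂)
    (x₂ x₃ : ZMod q)
    (hx₂ : x₂ = σ₁₂ + σ₂₂ + σ₃₂)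
    (hx₃ : x₃ = σ₁₃ + 2 * σ₃₁ - σ₃₂ + σ₂₃)
    (u : ZMod q) (hu : u = u₁ + u₂ + 3 * σ₃₁ - 2 * σ₃₂)
    (ω₂ : ZMod q) (hω₂ : ω₂ = -2 * x₂)
    (ωtilde₂ : ZMod q) (hωtilde₂ : ωtilde₂ = (4 : ZMod q)⁻¹ * ω₂)
    (ω₃ : ZMod q) (hω₃ : ω₃ = 3 * (2 : ZMod q)⁻¹ * x₃) :
    ωtilde₂ + ω₃ = u := by
  have hq : q.Prime := Fact.out
  have h2 : (2 : ZMod q) ≠ 0 := by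
    intro h
    have : ((2 : ℕ) : ZMod q) = 0 := by exact_mod_cast h
    rw [ZMod.natCast_eq_zero_iff] at this
    have := Nat.le_of_dvd (by norm_num) this
    omega
  have h4 : (4 : ZMod q) ≠ 0 := by
    have : (4 : ZMod q) = 2 * 2 := by norm_num
    rw [this]; exact mul_ne_zero h2 h2
  subst hσ₁₂ hσ₂₂ hσ₁₃ hσ₂₃ hx₂ hx₃ hu hω₂ hωtilde₂ hω₃
  field_simp
  ring
end

section
/- Completeness of the threshold signature: let q be a prime, G an additive commutative group that is a module over ZMod q, and B : G. Let m, r, k_A, k_B, σ_A, σ_B, u ∈ ZMod q with σ_A + σ_B = (k_A + k_B)·u, set k = k_A + k_B, Y = u•B, s_i = m·k_i + r·σ_i for i ∈ {A,B}, and s = s_A + s_B. Then s = k·(m + r·u); moreover if k ≠ 0 and s ≠ 0 then (m·s⁻¹)•B + (r·s⁻¹)•Y = k⁻¹•B, i.e. (r, s) passes ECDSA verification against the point R = k⁻¹•B. -/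
theorem threshold_signature_completeness
    (q : ℕ) [Fact q.Prime]
    (G : Type*) [AddCommGroup G] [Module (ZMod q) G]
    (B : G) (m r kA kB σA σB u : ZMod q)
    (hσ : σA + σB = (kA + kB) * u)
    (k : ZMod q) (hk : k = kA + kB)
    (Y : G) (hY : Y = u • B)
    (sA sB : ZMod q) (hsA : sA = m * kA + r * σA) (hsB : sB = m * kB + r * σB)
    (s : ZMod q) (hs : s = sA + sB) :
    s = k * (m + r * u) ∧
      (k ≠ 0 → s ≠ 0 → (m * s⁻¹) • B + (r * s⁻¹) • Y = k⁻¹ • B) := by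
  have h1 : s = k * (m + r * u) := by
    subst hs hsA hsB hk; ring_nf; ring_nf at hσ; linear_combination r * hσ
  refine ⟨h1, fun hk0 hs0 => ?_⟩
  subst hY
  rw [← smul_assoc, ← add_smul]
  congr 1
  have hmru : m + r * u ≠ 0 := by
    intro h; apply hs0; rw [h1, h, mul_zero]
  rw [h1, smul_eq_mul]
  field_simp
end

section
/- The signature consistency check passes in honest executions: let q be a prime, G an additive commutative group that is a module over ZMod q, and B, Y, R : G. Let m, r, s₁, s₂, l₁, l₂, ρ₁, ρ₂ ∈ ZMod q and suppose (s₁ + s₂)•R = m•B + r•Y. Define W_i = s_i•R + l_i•B, Z_i = ρ_i•B for i = 1,2, W = −(m•B) − r•Y + W₁ + W₂, Z = Z₁ + Z₂, U_i = ρ_i•W and T_i = l_i•Z. Then T₁ + T₂ = U₁ + U₂. -/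
theorem signature_check_passes
    (q : ℕ) [Fact q.Prime]
    (G : Type*) [AddCommGroup G] [Module (ZMod q) G]
    (B Y R : G)
    (m r s₁ s₂ l₁ l₂ ρ₁ ρ₂ : ZMod q)
    (hcorrect : (s₁ + s₂) • R = m • B + r • Y)
    (W₁ W₂ Z₁ Z₂ : G)
    (hW₁ : W₁ = s₁ • R + l₁ • B) (hW₂ : W₂ = s₂ • R + l₂ • B)
    (hZ₁ : Z₁ = ρ₁ • B) (hZ₂ : Z₂ = ρ₂ • B)
    (W Z : G)
    (hW : W = -(m • B) - r • Y + W₁ + W₂) (hZ : Z = Z₁ + Z₂)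
    (U₁ U₂ T₁ T₂ : G)
    (hU₁ : U₁ = ρ₁ • W) (hU₂ : U₂ = ρ₂ • W)
    (hT₁ : T₁ = l₁ • Z) (hT₂ : T₂ = l₂ • Z) :
    T₁ + T₂ = U₁ + U₂ := by
  have hW' : W = (l₁ + l₂) • B := by
    rw [hW, hW₁, hW₂, add_smul]
    have := hcorrect
    rw [add_smul] at this
    linear_combination (norm := module) this
  subst hZ₁ hZ₂ hZ hU₁ hU₂ hT₁ hT₂
  rw [hW']
  simp only [smul_add, smul_smul]
  ring_nf
  module
end
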